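/- arXiv:1006.5098 — 5 statements merged into one kernel-verified Lean document; each statement's English description precedes it below -/
import Mathlib

section
/- Let Q be a cost dioid and P = (Σ, M, I, F) a quantitative program over a finite state set Σ in which every state is reachable from I. Let Γ be the set of cycles of M, i.e., finite sequences of states σ₀, σ₁, …, σ_k with k ≥ 1 and σ_k = σ₀ such that M_{σⱼ,σⱼ₊₁} ≠ ⊥ for all j < k; the average cost of such a cycle c is q̃(c) = √[k]{ ⨂_{j=0}^{k−1} M_{σⱼ,σⱼ₊₁} }. Then the long-run cost of P equals the supremum of the average costs of all cycles: ρ(P) = ⨆_{c ∈ Γ} q̃(c). -/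
/-- In a cost dioid `Q`, for a quantitative program `P = (Σ, M, I, F)` over a
finite state set in which every state is reachable from `I`, the long-run cost
`ρ(P) = ⨆_{k=1}^{|Σ|} √[k]{tr (M ^ k)}` equals the supremum of the average costs
`√[k]{⨂_j M (σ j) (σ (j+1))}` over all cycles (paths with `σ_k = σ₀`, all steps `≠ ⊥`). -/
theorem stmt_2 {Q : Type*} [CommSemiring Q] [CompleteLattice Q]
    (hidem : ∀ a : Q, a + a = a)
    (hle : ∀ a b : Q, a ≤ b ↔ a + b = b)
    (hsup : ∀ a b : Q, a ⊔ b = a + b)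
    (hbot : (⊥ : Q) = 0)
    (hdistrib : ∀ (a : Q) (X : Set Q), a * sSup X = ⨆ x ∈ X, a * x)
    (root : Q → ℕ → Q)
    (hroot : ∀ (q : Q) (n : ℕ), 1 ≤ n → root q n ^ n = q)
    (hroot_unique : ∀ (q x : Q) (n : ℕ), 1 ≤ n → x ^ n = q → x = root q n)
    (hlsc : ∀ (n : ℕ), 1 ≤ n → ∀ X : Set Q, sSup X ^ n = ⨆ x ∈ X, x ^ n)
    {S : Type*} [Fintype S] [DecidableEq S]
    (M : Matrix S S Q) (I F : Set S)
    (hreach : ∀ σ : S, ∃ n : ℕ, ∃ p : Fin (n + 1) → S, p 0 ∈ I ∧ p (Fin.last n) = σ ∧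
      ∀ j : Fin n, M (p j.castSucc) (p j.succ) ≠ ⊥) :
    (⨆ k ∈ Finset.Icc 1 (Fintype.card S), root (⨆ σ : S, (M ^ k) σ σ) k) =
      sSup { q : Q | ∃ k : ℕ, 1 ≤ k ∧ ∃ p : Fin (k + 1) → S,
        p (Fin.last k) = p 0 ∧
        (∀ j : Fin k, M (p j.castSucc) (p j.succ) ≠ ⊥) ∧
        q = root (∏ j : Fin k, M (p j.castSucc) (p j.succ)) k } := by
  classical
  -- basic order facts
  have hzero_le : ∀ a : Q, (0 : Q) ≤ a := fun a => by rw [← hbot]; exact bot_le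
  have hle_add : ∀ a b : Q, a ≤ a + b := by
    intro a b; rw [hle, ← add_assoc, hidem]
  have hadd_le : ∀ a b c : Q, a ≤ c → b ≤ c → a + b ≤ c := by
    intro a b c hac hbc
    rw [hle] at hac hbc ⊢
    rw [add_assoc, hbc, hac]
  have hmul_le : ∀ a b c d : Q, a ≤ b → c ≤ d → a * c ≤ b * d := by
    intro a b c d hab hcd
    have h1 : a * c ≤ b * c := by rw [hle] at hab ⊢; rw [← add_mul, hab]
    have h2 : b * c ≤ b * d := by rw [hle] at hcd ⊢; rw [← mul_add, hcd]
    exact le_trans h1 h2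
  have hpow_le : ∀ (a b : Q) (n : ℕ), a ≤ b → a ^ n ≤ b ^ n := by
    intro a b n hab
    induction n with
    | zero => simp
    | succ n ihn => rw [pow_succ, pow_succ]; exact hmul_le _ _ _ _ ihn hab
  have hroot_pow : ∀ (x : Q) (n : ℕ), 1 ≤ n → root (x ^ n) n = x := fun x n hn =>
    (hroot_unique (x ^ n) x n hn rfl).symm
  have hroot_mono : ∀ (n : ℕ), 1 ≤ n → ∀ q q' : Q, q ≤ q' → root q n ≤ root q' n := by
    intro n hn q q' hqq'
    have h1 : (root q n ⊔ root q' n) ^ n = q' := by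
      rw [← sSup_pair, hlsc n hn, iSup_pair, hroot q n hn, hroot q' n hn, hsup,
        (hle q q').mp hqq']
    have h2 := hroot_unique q' _ n hn h1
    calc root q n ≤ root q n ⊔ root q' n := le_sup_left
      _ = root q' n := h2.symm ▸ rfl
  have havg : ∀ (k1 k2 : ℕ), 1 ≤ k1 → 1 ≤ k2 → ∀ q1 q2 : Q,
      root (q1 * q2) (k1 + k2) ≤ root q1 k1 ⊔ root q2 k2 := by
    intro k1 k2 hk1 hk2 q1 q2
    have hq : q1 * q2 ≤ (root q1 k1 ⊔ root q2 k2) ^ (k1 + k2) := by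
      rw [pow_add]
      calc q1 * q2 = root q1 k1 ^ k1 * root q2 k2 ^ k2 := by
            rw [hroot q1 k1 hk1, hroot q2 k2 hk2]
        _ ≤ _ := hmul_le _ _ _ _ (hpow_le _ _ k1 le_sup_left) (hpow_le _ _ k2 le_sup_right)
    have h := hroot_mono (k1 + k2) (by omega) _ _ hq
    rw [hroot_pow _ (k1 + k2) (by omega)] at h
    exact h
  have hle_sum : ∀ (g : S → Q) (c : S), g c ≤ ∑ x, g x := by
    intro g c
    rw [← Finset.add_sum_erase _ g (Finset.mem_univ c)]
    exact hle_add _ _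
  have hsum_le : ∀ (g : S → Q) (C : Q), (∀ x, g x ≤ C) → (∑ x, g x) ≤ C := by
    intro g C hg
    have h : ∀ s : Finset S, (∑ x ∈ s, g x) ≤ C := by
      intro s
      induction s using Finset.induction_on with
      | empty => simpa using hzero_le C
      | insert _ _ hnot ih => rw [Finset.sum_insert hnot]; exact hadd_le _ _ _ (hg _) ih
    exact h _
  -- path product is below the corresponding matrix power entry
  have hA : ∀ (k : ℕ) (P : ℕ → S) (a : ℕ),
      (∏ t ∈ Finset.range k, M (P (a + t)) (P (a + t + 1))) ≤ (M ^ k) (P a) (P (a + k)) := by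
    intro k
    induction k with
    | zero => intro P a; simp [Matrix.one_apply]
    | succ k ihk =>
      intro P a
      rw [Finset.prod_range_succ]
      have h2 : (M ^ k) (P a) (P (a + k)) * M (P (a + k)) (P (a + k + 1)) ≤
          (M ^ (k + 1)) (P a) (P (a + (k + 1))) := by
        rw [pow_succ, Matrix.mul_apply]
        exact hle_sum (fun c => (M ^ k) (P a) c * M c (P (a + k + 1))) (P (a + k))
      exact le_trans (hmul_le _ _ _ _ (ihk P a) le_rfl) h2
  -- a matrix power entry is bounded by any bound on all path products
  have hB : ∀ (k : ℕ) (σ τ : S) (x C : Q),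
      (∀ p : Fin (k + 1) → S, p 0 = σ → p (Fin.last k) = τ →
        (∏ j : Fin k, M (p j.castSucc) (p j.succ)) * x ≤ C) →
      (M ^ k) σ τ * x ≤ C := by
    intro k
    induction k with
    | zero =>
      intro σ τ x C h
      rw [pow_zero]
      by_cases hστ : σ = τ
      · subst hστ
        have h0 := h (fun _ => σ) rfl rfl
        simpa [Matrix.one_apply] using h0
      · rw [Matrix.one_apply_ne hστ, zero_mul]
        exact hzero_le C
    | succ k ihk =>
      intro σ τ x C h
      rw [pow_succ, Matrix.mul_apply, Finset.sum_mul]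
      refine hsum_le _ _ fun c => ?_
      rw [mul_assoc]
      refine ihk σ c (M c τ * x) C fun p hp0 hpl => ?_
      have h1 := h (Fin.snoc p τ)
        (by rw [← Fin.castSucc_zero, Fin.snoc_castSucc]; exact hp0)
        (by rw [Fin.snoc_last])
      rw [Fin.prod_univ_castSucc] at h1
      simp only [Fin.succ_castSucc, Fin.snoc_castSucc, Fin.succ_last, Fin.snoc_last, hpl] at h1
      rw [← mul_assoc]
      exact h1
  set Lval := ⨆ k ∈ Finset.Icc 1 (Fintype.card S), root (⨆ σ : S, (M ^ k) σ σ) k with hLdef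
  set s := sSup { q : Q | ∃ k : ℕ, 1 ≤ k ∧ ∃ p : Fin (k + 1) → S,
      p (Fin.last k) = p 0 ∧
      (∀ j : Fin k, M (p j.castSucc) (p j.succ) ≠ ⊥) ∧
      q = root (∏ j : Fin k, M (p j.castSucc) (p j.succ)) k } with hsdef
  -- main induction : every cycle's average cost is below Lval
  have hmain : ∀ k : ℕ, 1 ≤ k → ∀ P : ℕ → S, P k = P 0 →
      (∀ t, t < k → M (P t) (P (t + 1)) ≠ 0) →
      root (∏ t ∈ Finset.range k, M (P t) (P (t + 1))) k ≤ Lval := by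
    intro k
    induction k using Nat.strong_induction_on with
    | _ k ih =>
    intro hk1 P hcyc hsteps
    by_cases hcard : k ≤ Fintype.card S
    · -- short cycle : directly below the trace term
      have h1 : (∏ t ∈ Finset.range k, M (P t) (P (t + 1))) ≤ (M ^ k) (P 0) (P 0) := by
        have h0 := hA k P 0
        simp only [Nat.zero_add] at h0
        rwa [hcyc] at h0
      have h2 : (M ^ k) (P 0) (P 0) ≤ ⨆ σ : S, (M ^ k) σ σ := le_iSup (fun σ : S => (M ^ k) σ σ) (P 0)
      have h3 := hroot_mono k hk1 _ _ (le_trans h1 h2)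
      refine le_trans h3 ?_
      rw [hLdef]
      exact le_iSup₂ (f := fun n (_ : n ∈ Finset.Icc 1 (Fintype.card S)) =>
        root (⨆ σ : S, (M ^ n) σ σ) n) k (Finset.mem_Icc.mpr ⟨hk1, hcard⟩)
    · -- long cycle : split off a smaller cycle via pigeonhole
      push_neg at hcard
      obtain ⟨a, b, hab, hPab⟩ := Fintype.exists_ne_map_eq_of_card_lt
        (fun t : Fin k => P t) (by simpa using hcard)
      obtain ⟨i, j, hij, hjk, hPij⟩ : ∃ i j : ℕ, i < j ∧ j < k ∧ P i = P j := by
        rcases lt_or_gt_of_ne hab with h | h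
        · exact ⟨a, b, h, b.isLt, hPab⟩
        · exact ⟨b, a, h, a.isLt, hPab.symm⟩
      set d := j - i with hd
      set e := k - j with he
      have hd1 : 1 ≤ d := by omega
      have hdk : d < k := by omega
      have hkd1 : 1 ≤ k - d := by omega
      have hkdk : k - d < k := by omega
      -- the loop part
      have hloop0 := ih d hdk hd1 (fun t => P (i + t))
        (by show P (i + d) = P (i + 0)
            rw [show i + d = j from by omega, Nat.add_zero]
            exact hPij.symm)
        (by intro t ht
            show M (P (i + t)) (P (i + (t + 1))) ≠ 0
            exact hsteps (i + t) (by omega))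
      have hloop : root (∏ t ∈ Finset.range d, M (P (i + t)) (P (i + t + 1))) d ≤ Lval := by
        exact hloop0
      -- the rest part
      set P2 : ℕ → S := fun t => if t ≤ i then P t else P (t + d) with hP2
      have hcyc2 : P2 (k - d) = P2 0 := by
        simp only [hP2]
        rw [if_neg (by omega : ¬ (k - d ≤ i)), if_pos (Nat.zero_le i),
          show k - d + d = k from by omega]
        exact hcyc
      have hsteps2 : ∀ t, t < k - d → M (P2 t) (P2 (t + 1)) ≠ 0 := by
        intro t ht
        simp only [hP2]
        by_cases h1 : t + 1 ≤ i
        · rw [if_pos (by omega : t ≤ i), if_pos h1]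
          exact hsteps t (by omega)
        · by_cases h0 : t ≤ i
          · have hti : t = i := by omega
            rw [if_pos h0, if_neg h1]
            subst hti
            rw [hPij, show t + 1 + d = j + 1 from by omega]
            exact hsteps j (by omega)
          · rw [if_neg h0, if_neg h1, show t + 1 + d = t + d + 1 from by omega]
            exact hsteps (t + d) (by omega)
      have hrest0 := ih (k - d) hkdk hkd1 P2 hcyc2 hsteps2
      have hprod2 : (∏ t ∈ Finset.range (k - d), M (P2 t) (P2 (t + 1)))
          = (∏ t ∈ Finset.range i, M (P t) (P (t + 1))) *
            ∏ t ∈ Finset.range e, M (P (j + t)) (P (j + t + 1)) := by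
        rw [show k - d = i + e from by omega, Finset.prod_range_add]
        congr 1
        · refine Finset.prod_congr rfl fun t ht => ?_
          have ht' : t < i := Finset.mem_range.mp ht
          simp only [hP2]
          rw [if_pos (by omega : t ≤ i), if_pos (by omega : t + 1 ≤ i)]
        · refine Finset.prod_congr rfl fun t ht => ?_
          have hQ2a : P2 (i + t) = P (j + t) := by
            simp only [hP2]
            by_cases h0 : t = 0
            · subst h0
              rw [if_pos (by omega : i + 0 ≤ i)]
              rw [show i + 0 = i from by omega, show j + 0 = j from by omega]
              exact hPij
            · rw [if_neg (by omega : ¬ (i + t ≤ i))]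
              congr 1
              omega
          have hQ2b : P2 (i + t + 1) = P (j + t + 1) := by
            simp only [hP2]
            rw [if_neg (by omega : ¬ (i + t + 1 ≤ i))]
            congr 1
            omega
          rw [hQ2a, hQ2b]
      have hrest : root ((∏ t ∈ Finset.range i, M (P t) (P (t + 1))) *
          ∏ t ∈ Finset.range e, M (P (j + t)) (P (j + t + 1))) (k - d) ≤ Lval := by
        rw [← hprod2]
        exact hrest0
      -- splitting the whole product
      have hsplit1 : (∏ t ∈ Finset.range k, M (P t) (P (t + 1)))
          = (∏ t ∈ Finset.range j, M (P t) (P (t + 1))) *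
            ∏ t ∈ Finset.range e, M (P (j + t)) (P (j + t + 1)) := by
        simp only [show k = j + e from by omega, Finset.prod_range_add]
      have hsplit2 : (∏ t ∈ Finset.range j, M (P t) (P (t + 1)))
          = (∏ t ∈ Finset.range i, M (P t) (P (t + 1))) *
            ∏ t ∈ Finset.range d, M (P (i + t)) (P (i + t + 1)) := by
        simp only [show j = i + d from by omega, Finset.prod_range_add]
      have hfin : (∏ t ∈ Finset.range k, M (P t) (P (t + 1)))
          = (∏ t ∈ Finset.range d, M (P (i + t)) (P (i + t + 1))) *
            ((∏ t ∈ Finset.range i, M (P t) (P (t + 1))) *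
              ∏ t ∈ Finset.range e, M (P (j + t)) (P (j + t + 1))) := by
        rw [hsplit1, hsplit2]; ring
      calc root (∏ t ∈ Finset.range k, M (P t) (P (t + 1))) k
          = root ((∏ t ∈ Finset.range d, M (P (i + t)) (P (i + t + 1))) *
              ((∏ t ∈ Finset.range i, M (P t) (P (t + 1))) *
                ∏ t ∈ Finset.range e, M (P (j + t)) (P (j + t + 1)))) (d + (k - d)) := by
            rw [← hfin, show d + (k - d) = k from by omega]
        _ ≤ root (∏ t ∈ Finset.range d, M (P (i + t)) (P (i + t + 1))) d ⊔
              root ((∏ t ∈ Finset.range i, M (P t) (P (t + 1))) *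
                ∏ t ∈ Finset.range e, M (P (j + t)) (P (j + t + 1))) (k - d) :=
            havg d (k - d) hd1 hkd1 _ _
        _ ≤ Lval := sup_le hloop hrest
  -- conclude
  apply le_antisymm
  · -- Lval ≤ s
    rw [hLdef]
    refine iSup₂_le fun k hk => ?_
    obtain ⟨hk1, hk2⟩ := Finset.mem_Icc.mp hk
    have htr : (⨆ σ : S, (M ^ k) σ σ) ≤ s ^ k := by
      refine iSup_le fun σ => ?_
      have hB' := hB k σ σ 1 (s ^ k) ?_
      · simpa using hB'
      · intro p hp0 hpl
        rw [mul_one]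
        by_cases hz : ∀ jj : Fin k, M (p jj.castSucc) (p jj.succ) ≠ 0
        · have hmem : root (∏ jj : Fin k, M (p jj.castSucc) (p jj.succ)) k ∈
              { q : Q | ∃ k : ℕ, 1 ≤ k ∧ ∃ p : Fin (k + 1) → S,
                p (Fin.last k) = p 0 ∧
                (∀ j : Fin k, M (p j.castSucc) (p j.succ) ≠ ⊥) ∧
                q = root (∏ j : Fin k, M (p j.castSucc) (p j.succ)) k } :=
            ⟨k, hk1, p, hpl.trans hp0.symm,
              fun jj => by rw [hbot]; exact hz jj, rfl⟩
          have hle_s : root (∏ jj : Fin k, M (p jj.castSucc) (p jj.succ)) k ≤ s := by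
            rw [hsdef]; exact le_sSup hmem
          calc (∏ jj : Fin k, M (p jj.castSucc) (p jj.succ))
              = (root (∏ jj : Fin k, M (p jj.castSucc) (p jj.succ)) k) ^ k :=
                (hroot _ k hk1).symm
            _ ≤ s ^ k := hpow_le _ _ k hle_s
        · push_neg at hz
          obtain ⟨jj, hjj⟩ := hz
          rw [Finset.prod_eq_zero (Finset.mem_univ jj) hjj]
          exact hzero_le _
    have h := hroot_mono k hk1 _ _ htr
    rw [hroot_pow s k hk1] at h
    exact h
  · -- s ≤ Lval
    rw [hsdef]
    refine sSup_le fun q hq => ?_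
    obtain ⟨k, hk1, p, hcl, hst, rfl⟩ := hq
    set P : ℕ → S := fun t => p ⟨min t k, Nat.lt_succ_of_le (min_le_right t k)⟩ with hPdef
    have hPt : ∀ t (ht : t ≤ k), P t = p ⟨t, Nat.lt_succ_of_le ht⟩ := by
      intro t ht
      simp only [hPdef]
      congr 1
      exact Fin.ext (Nat.min_eq_left ht)
    have hPk : P k = P 0 := by
      rw [hPt k le_rfl, hPt 0 (Nat.zero_le k)]
      exact hcl
    have hstepsP : ∀ t, t < k → M (P t) (P (t + 1)) ≠ 0 := by
      intro t ht
      rw [hPt t ht.le, hPt (t + 1) ht]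
      have h := hst ⟨t, ht⟩
      rw [hbot] at h
      exact h
    have hprodeq : (∏ j : Fin k, M (p j.castSucc) (p j.succ))
        = ∏ t ∈ Finset.range k, M (P t) (P (t + 1)) := by
      rw [← Fin.prod_univ_eq_prod_range (fun t => M (P t) (P (t + 1))) k]
      refine Finset.prod_congr rfl fun j _ => ?_
      rw [hPt j.val j.isLt.le, hPt (j.val + 1) j.isLt]
      rfl
    rw [hprodeq]
    exact hmain k hk1 P hPk hstepsP
end

section
/- Let Q be a complete idempotent dioid, α : Σ → Σ# a function between finite state sets, and P = (Σ, M, I, F) a quantitative program over Σ. Define M# = α↑ M (α↑)ᵀ, I# = { α(σ) : σ ∈ I }, F# = { α(σ) : σ ∈ F }, and P# = (Σ#, M#, I#, F#). Then (P, P#, α) is a correct abstraction; moreover it is the best one: if P' = (Σ#, M', I', F') is such that (P, P', α) is a correct abstraction, then M# ≤ M' (entrywise), I# ⊆ I' and F# ⊆ F'. -/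
open Matrix

/-- Let `Q` be a complete idempotent dioid, `α : Σ → Σ#`,
`P = (Σ, M, I, F)` a program. With `M# = α↑ M (α↑)ᵀ`, `I# = α '' I`, `F# = α '' F`, the
triple `(P, P#, α)` is a correct abstraction, and it is the best one: every other correct
abstraction `(Σ#, M', I', F')` satisfies `M# ≤ M'` entrywise, `I# ⊆ I'` and `F# ⊆ F'`. -/
theorem stmt_5 {Q : Type*} [CommSemiring Q] [CompleteLattice Q]
    (hidem : ∀ a : Q, a + a = a)
    (hle : ∀ a b : Q, a ≤ b ↔ a + b = b)
    (hsup : ∀ a b : Q, a ⊔ b = a + b)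
    (hbot : (⊥ : Q) = 0)
    (hdistrib : ∀ (a : Q) (X : Set Q), a * sSup X = ⨆ x ∈ X, a * x)
    {S S' : Type*} [Fintype S] [DecidableEq S] [Fintype S'] [DecidableEq S']
    (α : S → S') (M : Matrix S S Q) (I F : Set S) :
    let A : Matrix S' S Q := Matrix.of fun a σ => if α σ = a then (1 : Q) else ⊥
    let M' : Matrix S' S' Q := A * M * Aᵀ
    ((∀ (a : S') (σ : S), (A * M) a σ ≤ (M' * A) a σ) ∧
      α '' I ⊆ α '' I ∧ α '' F ⊆ α '' F) ∧
    (∀ (M'' : Matrix S' S' Q) (I'' F'' : Set S'),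
      (∀ (a : S') (σ : S), (A * M) a σ ≤ (M'' * A) a σ) →
      α '' I ⊆ I'' → α '' F ⊆ F'' →
      (∀ a b : S', M' a b ≤ M'' a b) ∧ α '' I ⊆ I'' ∧ α '' F ⊆ F'') := by
  intro A M'
  have hzero : ∀ c : Q, (0 : Q) ≤ c := fun c => (hle 0 c).2 (zero_add c)
  have hadd : ∀ a b c d : Q, a ≤ b → c ≤ d → a + c ≤ b + d := by
    intro a b c d hab hcd
    rw [hle] at hab hcd ⊢
    calc (a + c) + (b + d) = (a + b) + (c + d) := by ring
    _ = b + d := by rw [hab, hcd]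
  have hsumle : ∀ (s : Finset S) (g : S → Q) (c : Q),
      (∀ τ ∈ s, g τ ≤ c) → ∑ τ ∈ s, g τ ≤ c := by
    intro s g c h
    induction s using Finset.induction with
    | empty => simpa using hzero c
    | @insert x s hx ih =>
      rw [Finset.sum_insert hx]
      have h1 := hadd _ _ _ _ (h x (Finset.mem_insert_self _ _))
        (ih fun τ ht => h τ (Finset.mem_insert_of_mem ht))
      calc g x + ∑ τ ∈ s, g τ ≤ c + c := h1
      _ = c := hidem c
  have hself : ∀ (g : S → Q) (σ : S), g σ ≤ ∑ τ, g τ := by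
    intro g σ
    rw [hle, ← Finset.add_sum_erase _ g (Finset.mem_univ σ), ← add_assoc, hidem]
  have hAval : ∀ (b : S') (σ : S), A b σ = if α σ = b then (1 : Q) else 0 := by
    intro b σ; simp [A, hbot]
  have hMA : ∀ (N : Matrix S' S' Q) (a : S') (σ : S), (N * A) a σ = N a (α σ) := by
    intro N a σ
    simp [Matrix.mul_apply, hAval, mul_ite, mul_one, mul_zero]
  have hM' : ∀ (a b : S'), M' a b = ∑ τ, (if α τ = b then (A * M) a τ else 0) := by
    intro a b
    show ((A * M) * Aᵀ) a b = _
    rw [Matrix.mul_apply]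
    refine Finset.sum_congr rfl fun τ _ => ?_
    rw [Matrix.transpose_apply, hAval]
    by_cases h : α τ = b <;> simp [h]
  refine ⟨⟨?_, subset_rfl, subset_rfl⟩, ?_⟩
  · intro a σ
    rw [hMA, hM']
    have := hself (fun τ => if α τ = α σ then (A * M) a τ else 0) σ
    simpa using this
  · intro M'' I'' F'' hM'' hI hF
    refine ⟨?_, hI, hF⟩
    intro a b
    rw [hM']
    apply hsumle
    intro τ _
    by_cases h : α τ = b
    · rw [if_pos h]
      have := hM'' a τ
      rw [hMA, h] at this
      exact this
    · rw [if_neg h]; exact hzero _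
end

section
/- Let Q be a complete idempotent dioid, α : Σ → Σ# a function between finite state sets, P = (Σ, M, I, F) and P# = (Σ#, M#, I#, F#) quantitative programs. If (P, P#, α) is a correct abstraction, then gc(P) ≤ gc(P#) in the order of Q. -/
open Matrix

section Aux

variable {Q : Type*} [CommSemiring Q] [CompleteLattice Q]

lemma aux_add_mono (hle : ∀ a b : Q, a ≤ b ↔ a + b = b) {a b c d : Q}
    (hab : a ≤ b) (hcd : c ≤ d) : a + c ≤ b + d := by
  rw [hle] at hab hcd ⊢
  calc a + c + (b + d) = (a + b) + (c + d) := by ring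
  _ = b + d := by rw [hab, hcd]

lemma aux_le_add_left (hidem : ∀ a : Q, a + a = a) (hle : ∀ a b : Q, a ≤ b ↔ a + b = b)
    (a b : Q) : a ≤ a + b := by
  rw [hle]
  calc a + (a + b) = (a + a) + b := by ring
  _ = a + b := by rw [hidem a]

lemma aux_sum_mono (hle : ∀ a b : Q, a ≤ b ↔ a + b = b) {ι : Type*} (s : Finset ι)
    (f g : ι → Q) (h : ∀ i ∈ s, f i ≤ g i) : ∑ i ∈ s, f i ≤ ∑ i ∈ s, g i := by
  classical
  induction s using Finset.induction_on with
  | empty => simp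
  | @insert x t hx ih =>
    rw [Finset.sum_insert hx, Finset.sum_insert hx]
    exact aux_add_mono hle (h _ (Finset.mem_insert_self _ _))
      (ih fun i hi => h i (Finset.mem_insert_of_mem hi))

lemma aux_le_sum (hidem : ∀ a : Q, a + a = a) (hle : ∀ a b : Q, a ≤ b ↔ a + b = b)
    {ι : Type*} (s : Finset ι) (f : ι → Q) (b : ι) (hb : b ∈ s) :
    f b ≤ ∑ i ∈ s, f i := by
  classical
  rw [← Finset.add_sum_erase s f hb]
  exact aux_le_add_left hidem hle _ _

lemma aux_mul_le_mul_left (hle : ∀ a b : Q, a ≤ b ↔ a + b = b) {a b : Q} (c : Q)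
    (h : a ≤ b) : c * a ≤ c * b := by
  rw [hle] at h ⊢
  rw [← mul_add, h]

lemma aux_mul_le_mul_right (hle : ∀ a b : Q, a ≤ b ↔ a + b = b) {a b : Q} (c : Q)
    (h : a ≤ b) : a * c ≤ b * c := by
  rw [hle] at h ⊢
  rw [← add_mul, h]

lemma aux_lmul_mono (hle : ∀ a b : Q, a ≤ b ↔ a + b = b)
    {n m p : Type*} [Fintype m] (X : Matrix n m Q) (Y Z : Matrix m p Q)
    (h : ∀ a b, Y a b ≤ Z a b) (a : n) (b : p) : (X * Y) a b ≤ (X * Z) a b := by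
  simp only [Matrix.mul_apply]
  exact aux_sum_mono hle _ _ _ fun i _ => aux_mul_le_mul_left hle (X a i) (h i b)

lemma aux_rmul_mono (hle : ∀ a b : Q, a ≤ b ↔ a + b = b)
    {n m p : Type*} [Fintype m] (Y Z : Matrix n m Q) (X : Matrix m p Q)
    (h : ∀ a b, Y a b ≤ Z a b) (a : n) (b : p) : (Y * X) a b ≤ (Z * X) a b := by
  simp only [Matrix.mul_apply]
  exact aux_sum_mono hle _ _ _ fun i _ => aux_mul_le_mul_right hle (X i b) (h a i)

end Aux

/-- Let `Q` be a complete idempotent dioid, `α : Σ → Σ#`, and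
`P = (Σ, M, I, F)`, `P# = (Σ#, M#, I#, F#)` quantitative programs. If `(P, P#, α)` is a
correct abstraction then `gc(P) ≤ gc(P#)`, where
`gc = ⨆ {(N ^ k) i f : i initial, f final, k ≥ 1}`. -/
theorem stmt_6 {Q : Type*} [CommSemiring Q] [CompleteLattice Q]
    (hidem : ∀ a : Q, a + a = a)
    (hle : ∀ a b : Q, a ≤ b ↔ a + b = b)
    (hsup : ∀ a b : Q, a ⊔ b = a + b)
    (hbot : (⊥ : Q) = 0)
    (hdistrib : ∀ (a : Q) (X : Set Q), a * sSup X = ⨆ x ∈ X, a * x)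
    {S S' : Type*} [Fintype S] [DecidableEq S] [Fintype S'] [DecidableEq S']
    (α : S → S') (M : Matrix S S Q) (I F : Set S)
    (M' : Matrix S' S' Q) (I' F' : Set S')
    (hcorrect : ∀ (a : S') (σ : S),
      ((Matrix.of fun a σ => if α σ = a then (1 : Q) else ⊥) * M) a σ ≤
        (M' * (Matrix.of fun a σ => if α σ = a then (1 : Q) else ⊥)) a σ)
    (hI : α '' I ⊆ I') (hF : α '' F ⊆ F') :
    (⨆ i ∈ I, ⨆ f ∈ F, ⨆ (k : ℕ) (_ : 1 ≤ k), (M ^ k) i f) ≤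
      ⨆ i ∈ I', ⨆ f ∈ F', ⨆ (k : ℕ) (_ : 1 ≤ k), (M' ^ k) i f := by
  set A : Matrix S' S Q := Matrix.of fun a σ => if α σ = a then (1 : Q) else ⊥ with hA
  -- key: A * M^k ≤ M'^k * A
  have key : ∀ k : ℕ, ∀ a b, (A * M ^ k) a b ≤ (M' ^ k * A) a b := by
    intro k
    induction k with
    | zero => simp
    | succ k ih =>
      intro a b
      have h1 : A * M ^ (k + 1) = (A * M ^ k) * M := by
        rw [pow_succ, ← Matrix.mul_assoc]
      have h2 : M' ^ (k + 1) * A = M' ^ k * (M' * A) := by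
        rw [pow_succ, Matrix.mul_assoc]
      rw [h1, h2]
      calc ((A * M ^ k) * M) a b ≤ ((M' ^ k * A) * M) a b :=
            aux_rmul_mono hle (A * M ^ k) (M' ^ k * A) M ih a b
        _ = (M' ^ k * (A * M)) a b := by rw [Matrix.mul_assoc]
        _ ≤ (M' ^ k * (M' * A)) a b :=
            aux_lmul_mono hle (M' ^ k) (A * M) (M' * A) hcorrect a b
  -- entrywise consequence: (M^k) i f ≤ (M'^k) (α i) (α f)
  have entry : ∀ (k : ℕ) (i f : S), (M ^ k) i f ≤ (M' ^ k) (α i) (α f) := by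
    intro k i f
    have h1 : (M ^ k) i f ≤ (A * M ^ k) (α i) f := by
      rw [Matrix.mul_apply]
      have hterm : A (α i) i * (M ^ k) i f = (M ^ k) i f := by simp [hA]
      calc (M ^ k) i f = A (α i) i * (M ^ k) i f := hterm.symm
        _ ≤ ∑ σ : S, A (α i) σ * (M ^ k) σ f :=
          aux_le_sum hidem hle Finset.univ (fun σ => A (α i) σ * (M ^ k) σ f) i
            (Finset.mem_univ i)
    have h2 : (M' ^ k * A) (α i) f = (M' ^ k) (α i) (α f) := by
      rw [Matrix.mul_apply]
      simp only [hA, Matrix.of_apply, hbot, mul_ite, mul_one, mul_zero]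
      rw [Finset.sum_ite_eq]
      simp
    exact le_trans (le_trans h1 (key k (α i) f)) (le_of_eq h2)
  -- assemble
  refine iSup₂_le fun i hi => iSup₂_le fun f hf => iSup₂_le fun k hk => ?_
  have hi' : α i ∈ I' := hI ⟨i, hi, rfl⟩
  have hf' : α f ∈ F' := hF ⟨f, hf, rfl⟩
  exact le_trans (entry k i f) (le_iSup_of_le (α i) <| le_iSup_of_le hi' <|
    le_iSup_of_le (α f) <| le_iSup_of_le hf' <| le_iSup_of_le k <| le_iSup_of_le hk le_rfl)
end

section
/- Let Q be a cost dioid, α : Σ → Σ# a function between finite state sets, P = (Σ, M, I, F) and P# = (Σ#, M#, I#, F#) quantitative programs. If (P, P#, α) is a correct abstraction, then ρ(P) ≤ ρ(P#) in the order of Q, where ρ denotes the long-run cost ρ(N) = ⨆_{k≥1} √[k]{ tr(N^k) } of the corresponding transition matrix. -/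
open Matrix


private lemma sum_mono_aux {Q : Type*} [CommSemiring Q] [CompleteLattice Q]
    (hle : ∀ a b : Q, a ≤ b ↔ a + b = b)
    {ι : Type*} (s : Finset ι) (f g : ι → Q)
    (h : ∀ i ∈ s, f i ≤ g i) : ∑ i ∈ s, f i ≤ ∑ i ∈ s, g i := by
  have hadd_mono : ∀ a b c d : Q, a ≤ b → c ≤ d → a + c ≤ b + d := by
    intro a b c d hab hcd
    rw [hle] at hab hcd ⊢
    calc a + c + (b + d) = (a + b) + (c + d) := by ring
    _ = b + d := by rw [hab, hcd]
  induction s using Finset.cons_induction with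
  | empty => simp
  | cons x s' hx ih =>
    rw [Finset.sum_cons, Finset.sum_cons]
    exact hadd_mono _ _ _ _ (h x (Finset.mem_cons_self x s'))
      (ih fun i hi => h i (Finset.mem_cons_of_mem hi))

/-- Let `Q` be a cost dioid, `α : Σ → Σ#`, and `P = (Σ, M, I, F)`,
`P# = (Σ#, M#, I#, F#)` quantitative programs. If `(P, P#, α)` is a correct abstraction
then `ρ(P) ≤ ρ(P#)`, where `ρ(N) = ⨆ k ≥ 1, √[k]{tr (N ^ k)}`. -/
theorem stmt_7 {Q : Type*} [CommSemiring Q] [CompleteLattice Q]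
    (hidem : ∀ a : Q, a + a = a)
    (hle : ∀ a b : Q, a ≤ b ↔ a + b = b)
    (hsup : ∀ a b : Q, a ⊔ b = a + b)
    (hbot : (⊥ : Q) = 0)
    (hdistrib : ∀ (a : Q) (X : Set Q), a * sSup X = ⨆ x ∈ X, a * x)
    (root : Q → ℕ → Q)
    (hroot : ∀ (q : Q) (n : ℕ), 1 ≤ n → root q n ^ n = q)
    (hroot_unique : ∀ (q x : Q) (n : ℕ), 1 ≤ n → x ^ n = q → x = root q n)
    (hlsc : ∀ (n : ℕ), 1 ≤ n → ∀ X : Set Q, sSup X ^ n = ⨆ x ∈ X, x ^ n)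
    {S S' : Type*} [Fintype S] [DecidableEq S] [Fintype S'] [DecidableEq S']
    (α : S → S') (M : Matrix S S Q) (I F : Set S)
    (M' : Matrix S' S' Q) (I' F' : Set S')
    (hcorrect : ∀ (a : S') (σ : S),
      ((Matrix.of fun a σ => if α σ = a then (1 : Q) else ⊥) * M) a σ ≤
        (M' * (Matrix.of fun a σ => if α σ = a then (1 : Q) else ⊥)) a σ)
    (hI : α '' I ⊆ I') (hF : α '' F ⊆ F') :
    (⨆ (k : ℕ) (_ : 1 ≤ k), root (⨆ σ : S, (M ^ k) σ σ) k) ≤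
      ⨆ (k : ℕ) (_ : 1 ≤ k), root (⨆ σ : S', (M' ^ k) σ σ) k := by
  set A : Matrix S' S Q :=
    Matrix.of fun a σ => if α σ = a then (1 : Q) else ⊥ with hA
  -- basic order facts
  have hadd_mono : ∀ a b c d : Q, a ≤ b → c ≤ d → a + c ≤ b + d := by
    intro a b c d hab hcd
    rw [hle] at hab hcd ⊢
    calc a + c + (b + d) = (a + b) + (c + d) := by ring
    _ = b + d := by rw [hab, hcd]
  have hmul_mono : ∀ a b c : Q, a ≤ b → c * a ≤ c * b := by
    intro a b c hab
    rw [hle] at hab ⊢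
    calc c * a + c * b = c * (a + b) := by ring
    _ = c * b := by rw [hab]
  have hmul_mono' : ∀ a b c : Q, a ≤ b → a * c ≤ b * c := by
    intro a b c hab
    rw [mul_comm a c, mul_comm b c]; exact hmul_mono a b c hab
  have hle_add : ∀ a b : Q, a ≤ b + a := by
    intro a b
    rw [hle]
    calc a + (b + a) = b + (a + a) := by ring
    _ = b + a := by rw [hidem]
  -- matrix multiplication monotonicity (entrywise)
  have hmatmul_left : ∀ {X Y : Matrix S' S Q} (Z : Matrix S S Q),
      (∀ a σ, X a σ ≤ Y a σ) → ∀ a σ, (X * Z) a σ ≤ (Y * Z) a σ := by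
    intro X Y Z h a σ
    rw [Matrix.mul_apply, Matrix.mul_apply]
    apply sum_mono_aux hle
    intro τ _
    exact hmul_mono' (X a τ) (Y a τ) (Z τ σ) (h a τ)
  have hmatmul_right : ∀ (Z : Matrix S' S' Q) {X Y : Matrix S' S Q},
      (∀ a σ, X a σ ≤ Y a σ) → ∀ a σ, (Z * X) a σ ≤ (Z * Y) a σ := by
    intro Z X Y h a σ
    rw [Matrix.mul_apply, Matrix.mul_apply]
    apply sum_mono_aux hle
    intro τ _
    exact hmul_mono (X τ σ) (Y τ σ) (Z a τ) (h τ σ)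
  -- key simulation: A * M^k ≤ M'^k * A entrywise
  have hsim : ∀ k : ℕ, ∀ a σ, (A * M ^ k) a σ ≤ (M' ^ k * A) a σ := by
    intro k
    induction k with
    | zero => simp
    | succ n ih =>
      intro a σ
      have h1 : (A * M ^ (n + 1)) a σ = ((A * M ^ n) * M) a σ := by
        rw [pow_succ, ← Matrix.mul_assoc]
      have h2 : (M' ^ (n + 1) * A) a σ = (M' ^ n * (M' * A)) a σ := by
        rw [pow_succ, Matrix.mul_assoc]
      rw [h1, h2]
      calc ((A * M ^ n) * M) a σ ≤ ((M' ^ n * A) * M) a σ :=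
            hmatmul_left M ih a σ
        _ = (M' ^ n * (A * M)) a σ := by rw [Matrix.mul_assoc]
        _ ≤ (M' ^ n * (M' * A)) a σ :=
            hmatmul_right (M' ^ n) (fun a' σ' => hcorrect a' σ') a σ
  -- trace comparison
  have htr : ∀ k : ℕ, ∀ σ : S, (M ^ k) σ σ ≤ (M' ^ k) (α σ) (α σ) := by
    intro k σ
    have hleft : (M ^ k) σ σ ≤ (A * M ^ k) (α σ) σ := by
      rw [Matrix.mul_apply]
      have hmem : σ ∈ (Finset.univ : Finset S) := Finset.mem_univ σ
      rw [← Finset.sum_erase_add _ _ hmem]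
      have : A (α σ) σ * (M ^ k) σ σ = (M ^ k) σ σ := by
        simp [hA]
      rw [this]
      exact hle_add _ _
    have hright : (A * M ^ k) (α σ) σ ≤ (M' ^ k * A) (α σ) σ := hsim k (α σ) σ
    have heq : (M' ^ k * A) (α σ) σ = (M' ^ k) (α σ) (α σ) := by
      rw [Matrix.mul_apply]
      simp [hA, hbot, eq_comm, mul_ite]
    exact le_trans hleft (le_trans hright (le_of_eq heq))
  -- root monotone
  have hrootmono : ∀ (a b : Q) (k : ℕ), 1 ≤ k → a ≤ b → root a k ≤ root b k := by
    intro a b k hk hab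
    set x := root a k
    set y := root b k
    have hxy : (x ⊔ y) ^ k = b := by
      rw [← sSup_pair, hlsc k hk, iSup_pair, hroot a k hk, hroot b k hk,
        sup_eq_right.mpr hab]
    have := hroot_unique b (x ⊔ y) k hk hxy
    calc x ≤ x ⊔ y := le_sup_left
    _ = y := this.symm ▸ rfl
  -- finish
  refine iSup_le fun k => iSup_le fun hk => ?_
  refine le_iSup_of_le k (le_iSup_of_le hk ?_)
  refine hrootmono _ _ k hk ?_
  refine iSup_le fun σ => le_trans (htr k σ) ?_
  exact le_iSup (fun σ' : S' => (M' ^ k) σ' σ') (α σ)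
end

section
/- Let Q be a selective complete idempotent dioid, Σ and Σ# finite sets, and let A ∈ Q^{Σ#×Σ}, M ∈ Q^{Σ×Σ}, M# ∈ Q^{Σ#×Σ#} with all entries of A equal to ⊥ or e, such that (M, M#, A) is a correct linear abstraction (A M ≤ M# A entrywise). Then for every σ ∈ Σ and k ≥ 1 with (M^k)_{σ,σ} ≠ ⊥, and for every σ#_i ∈ Σ# with A_{σ#_i,σ} = e, there exists σ#_j ∈ Σ# with A_{σ#_j,σ} = e such that ((M#)^k)_{σ#_i,σ#_j} ≥ (M^k)_{σ,σ}. -/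
open Matrix


private lemma stmt13_sum_le {Q : Type*} [CommSemiring Q] [CompleteLattice Q]
    (hidem : ∀ a : Q, a + a = a) (hle : ∀ a b : Q, a ≤ b ↔ a + b = b)
    {ι : Type*} (s : Finset ι) (f g : ι → Q)
    (h : ∀ x ∈ s, f x ≤ g x) : ∑ x ∈ s, f x ≤ ∑ x ∈ s, g x := by
  induction s using Finset.cons_induction with
  | empty => simp
  | cons a s ha ih =>
    rw [Finset.sum_cons, Finset.sum_cons]
    have hab := h a (by simp)
    have hcd := ih fun x hx => h x (by simp [hx])
    rw [hle] at hab hcd ⊢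
    calc (f a + ∑ x ∈ s, f x) + (g a + ∑ x ∈ s, g x)
        = (f a + g a) + (∑ x ∈ s, f x + ∑ x ∈ s, g x) := by ring
    _ = g a + ∑ x ∈ s, g x := by rw [hab, hcd]

private lemma stmt13_le_sum {Q : Type*} [CommSemiring Q] [CompleteLattice Q]
    (hidem : ∀ a : Q, a + a = a) (hle : ∀ a b : Q, a ≤ b ↔ a + b = b)
    {ι : Type*} [DecidableEq ι] (s : Finset ι) (f : ι → Q) (j : ι) (hj : j ∈ s) :
    f j ≤ ∑ x ∈ s, f x := by
  rw [hle, ← Finset.add_sum_erase s f hj, ← add_assoc, hidem]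

private lemma stmt13_sel_sum {Q : Type*} [CommSemiring Q] [CompleteLattice Q]
    (hidem : ∀ a : Q, a + a = a) (hsel : ∀ a b : Q, a + b = a ∨ a + b = b)
    {ι : Type*} (s : Finset ι) (f : ι → Q) (hne : s.Nonempty) :
    ∃ j ∈ s, ∑ x ∈ s, f x = f j := by
  induction s using Finset.cons_induction with
  | empty => exact absurd rfl hne.ne_empty
  | cons a s ha ih =>
    rw [Finset.sum_cons]
    rcases s.eq_empty_or_nonempty with h | h
    · subst h; exact ⟨a, by simp, by simp⟩
    · obtain ⟨j, hj, hje⟩ := ih h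
      rw [hje]
      rcases hsel (f a) (f j) with h' | h'
      · exact ⟨a, by simp, h'⟩
      · exact ⟨j, by simp [hj], h'⟩

/-- Let `Q` be a selective complete idempotent dioid and `(M, M#, A)` a
correct linear abstraction with `A` a `⊥`/`e` matrix. Then for every `σ` and `k ≥ 1` with
`(M^k) σ σ ≠ ⊥`, and every abstract state `σ#ᵢ` with `A σ#ᵢ σ = e`, there is an abstract
state `σ#ⱼ` with `A σ#ⱼ σ = e` such that `((M#)^k) σ#ᵢ σ#ⱼ ≥ (M^k) σ σ`. -/
theorem stmt_13 {Q : Type*} [CommSemiring Q] [CompleteLattice Q]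
    (hidem : ∀ a : Q, a + a = a)
    (hle : ∀ a b : Q, a ≤ b ↔ a + b = b)
    (hsup : ∀ a b : Q, a ⊔ b = a + b)
    (hbot : (⊥ : Q) = 0)
    (hdistrib : ∀ (a : Q) (X : Set Q), a * sSup X = ⨆ x ∈ X, a * x)
    (hsel : ∀ a b : Q, a + b = a ∨ a + b = b)
    {S S' : Type*} [Fintype S] [DecidableEq S] [Fintype S'] [DecidableEq S']
    (A : Matrix S' S Q) (M : Matrix S S Q) (M' : Matrix S' S' Q)
    (hA : ∀ (a : S') (σ : S), A a σ = ⊥ ∨ A a σ = 1)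
    (hcorrect : ∀ (a : S') (σ : S), (A * M) a σ ≤ (M' * A) a σ)
    (σ : S) (k : ℕ) (hk : 1 ≤ k) (hM : (M ^ k) σ σ ≠ ⊥)
    (i : S') (hi : A i σ = 1) :
    ∃ j : S', A j σ = 1 ∧ (M ^ k) σ σ ≤ (M' ^ k) i j := by
  clear hk
  -- basic order facts
  have hle_add : ∀ a b : Q, a ≤ a + b := by
    intro a b
    rw [hle, ← add_assoc, hidem]
  have hadd_le : ∀ {a b c d : Q}, a ≤ b → c ≤ d → a + c ≤ b + d := by
    intro a b c d hab hcd
    rw [hle] at hab hcd ⊢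
    calc (a + c) + (b + d) = (a + b) + (c + d) := by ring
    _ = b + d := by rw [hab, hcd]
  have hmul_left : ∀ {a b : Q} (c : Q), a ≤ b → c * a ≤ c * b := by
    intro a b c h
    rw [hle] at h ⊢
    rw [← mul_add, h]
  have hmul_right : ∀ {a b : Q} (c : Q), a ≤ b → a * c ≤ b * c := by
    intro a b c h
    rw [hle] at h ⊢
    rw [← add_mul, h]
  -- A * M^k ≤ M'^k * A entrywise
  have key : ∀ n : ℕ, ∀ (a : S') (τ : S), (A * M ^ n) a τ ≤ (M' ^ n * A) a τ := by
    intro n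
    induction n with
    | zero => intro a τ; simp
    | succ n ih =>
      intro a τ
      have h1 : (A * M ^ (n + 1)) a τ ≤ ((M' ^ n * A) * M) a τ := by
        rw [pow_succ, ← Matrix.mul_assoc]
        rw [Matrix.mul_apply, Matrix.mul_apply]
        refine stmt13_sum_le hidem hle _ _ _ ?_
        intro x _
        exact hmul_right _ (ih a x)
      have h2 : ((M' ^ n * A) * M) a τ ≤ (M' ^ (n + 1) * A) a τ := by
        rw [Matrix.mul_assoc, pow_succ, Matrix.mul_assoc]
        rw [Matrix.mul_apply, Matrix.mul_apply]
        refine stmt13_sum_le hidem hle _ _ _ ?_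
        intro x _
        exact hmul_left _ (hcorrect x τ)
      exact le_trans h1 h2
  have hstart : (M ^ k) σ σ ≤ (A * M ^ k) i σ := by
    have := stmt13_le_sum hidem hle Finset.univ (fun τ => A i τ * (M ^ k) τ σ) σ (Finset.mem_univ σ)
    rw [Matrix.mul_apply]
    simpa [hi] using this
  have hmain : (M ^ k) σ σ ≤ (M' ^ k * A) i σ := le_trans hstart (key k i σ)
  rw [Matrix.mul_apply] at hmain
  obtain ⟨j, _, hje⟩ := stmt13_sel_sum hidem hsel Finset.univ (fun j => (M' ^ k) i j * A j σ)
    ⟨i, Finset.mem_univ i⟩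
  rw [hje] at hmain
  rcases hA j σ with h | h
  · exfalso
    apply hM
    rw [h, hbot, mul_zero, ← hbot] at hmain
    exact le_bot_iff.mp hmain
  · exact ⟨j, h, by rwa [h, mul_one] at hmain⟩
end
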